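/- Let Γ be a group acting on a bipartite tree Σ = (V_e ⊔ V_ne, E) such that every vertex in V_e has elementary (virtually cyclic) stabilizer, every vertex in V_ne has non-elementary stabilizer, and every vertex stabilizer H satisfies Comm_Γ(H) = H (fullness). If two distinct vertices u, v have equal stabilizers, then both u and v lie in V_e, and moreover the stabilizer of every V_e-vertex on the geodesic [u,v] equals Γ(u). -/
import Mathlib

private lemma list_map_eq_self {α : Type*} (f : α → α) :
    ∀ (l : List α), List.map f l = l → ∀ x ∈ l, f x = x := by
  intro l
  induction l with
  | nil => simp
  | cons a l ih =>
    intro h x hx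
    simp only [List.map_cons, List.cons.injEq] at h
    rcases List.mem_cons.1 hx with rfl | hx
    · exact h.1
    · exact ih h.2 x hx



/-- Bowditch-style bipartite splitting tree: suppose a one-ended hyperbolic group `Γ`
acts on a bipartite tree whose vertex set is partitioned into `Ve` (vertices with
elementary, i.e. virtually cyclic, stabilizer) and its complement (vertices with
non-elementary stabilizer), each vertex stabilizer being full (equal to its
commensurator, abstracted here via the listed standard facts).  If two distinct
vertices `u, v` have equal stabilizers, then both lie in `Ve`, and the stabilizer of
every `Ve`-vertex on the geodesic `[u,v]` equals `Γ(u)`. -/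
theorem equal_stabilizers_implies_elementary
    {V : Type*} (G : SimpleGraph V) (hT : G.IsTree)
    {Γ : Type*} [Group Γ] (φ : Γ →* Equiv.Perm V)
    (hAut : ∀ (g : Γ) (a b : V), G.Adj a b → G.Adj (φ g a) (φ g b))
    (stab : V → Subgroup Γ)
    (hstab : ∀ x : V, stab x = (MulAction.stabilizer (Equiv.Perm V) x).comap φ)
    (Ve : Set V)
    (Elementary : Subgroup Γ → Prop)
    -- the partition: `Ve` consists exactly of the vertices with elementary stabilizer
    (hVe : ∀ x : V, x ∈ Ve ↔ Elementary (stab x))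
    -- bipartite: edges join `Ve` to its complement
    (hbip : ∀ a b : V, G.Adj a b → (a ∈ Ve ↔ b ∉ Ve))
    -- fullness: each vertex stabilizer is its own commensurator, expressed via:
    -- a non-elementary subgroup is not contained in an elementary subgroup
    (hNE : ∀ H K : Subgroup Γ, ¬ Elementary H → Elementary K → ¬ H ≤ K)
    -- subgroups of elementary groups are elementary
    (hSub : ∀ H K : Subgroup Γ, Elementary K → H ≤ K → Elementary H)
    -- any infinite elementary subgroup lies in a unique maximal elementary subgroup
    (hMax : ∀ H : Subgroup Γ, (H : Set Γ).Infinite → Elementary H →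
      ∃! M : Subgroup Γ, Elementary M ∧ H ≤ M ∧
        ∀ K : Subgroup Γ, Elementary K → M ≤ K → M = K)
    -- fullness of vertex stabilizers: every elementary vertex stabilizer is maximal
    (hFull : ∀ x ∈ Ve, ∀ K : Subgroup Γ, Elementary K → stab x ≤ K → stab x = K) :
    ∀ u v : V, u ≠ v → stab u = stab v →
      u ∈ Ve ∧ v ∈ Ve ∧
      ∀ (p : G.Walk u v), p.IsPath →
        ∀ w ∈ p.support, w ∈ Ve → stab w = stab u := by
  intro u v huv hst
  -- membership criterion
  have hmem : ∀ (g : Γ) (x : V), g ∈ stab x ↔ φ g x = x := by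
    intro g x
    rw [hstab x]
    simp [Subgroup.mem_comap, MulAction.mem_stabilizer_iff, Equiv.Perm.smul_def]
  -- key: stab u fixes every vertex of a path from u to v
  have key : ∀ (p : G.Walk u v), p.IsPath → ∀ w ∈ p.support, stab u ≤ stab w := by
    intro p hp w hw g hg
    have hgu : φ g u = u := (hmem g u).1 hg
    have hgv : φ g v = v := (hmem g v).1 (hst ▸ hg)
    let f : G →g G := ⟨φ g, fun h => hAut g _ _ h⟩
    have hinj : Function.Injective f := (φ g).injective
    have hq : ((p.map f).copy hgu hgv).IsPath := by
      rw [SimpleGraph.Walk.isPath_copy]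
      exact SimpleGraph.Walk.map_isPath_of_injective hinj hp
    have huniq := (hT.existsUnique_path u v).unique hq hp
    have hsupp : List.map (φ g) p.support = p.support := by
      have := congrArg SimpleGraph.Walk.support huniq
      rwa [SimpleGraph.Walk.support_copy, SimpleGraph.Walk.support_map] at this
    exact (hmem g w).2 (list_map_eq_self (φ g) p.support hsupp w hw)
  -- pick a path from u to v
  obtain ⟨p0, hp0, -⟩ := hT.existsUnique_path u v
  -- u ∈ Ve
  have hu : u ∈ Ve := by
    cases p0 with
    | nil => exact absurd rfl huv
    | @cons _ b _ h q =>
      by_cases hb : b ∈ Ve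
      · have hle : stab u ≤ stab b :=
          key (SimpleGraph.Walk.cons h q) hp0 b (by simp)
        exact (hVe u).2 (hSub _ _ ((hVe b).1 hb) hle)
      · exact (hbip u b h).2 hb
  have hv : v ∈ Ve := by
    have hp1 : p0.reverse.IsPath := hp0.reverse
    have hkey' : ∀ w ∈ p0.support, stab v ≤ stab w := by
      intro w hw
      exact hst ▸ key p0 hp0 w hw
    cases hrev : p0.reverse with
    | nil => exact absurd rfl (Ne.symm huv)
    | @cons _ b _ h q =>
      have hb' : b ∈ p0.support := by
        have : b ∈ p0.reverse.support := by rw [hrev]; simp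
        rwa [SimpleGraph.Walk.support_reverse, List.mem_reverse] at this
      by_cases hb : b ∈ Ve
      · exact (hVe v).2 (hSub _ _ ((hVe b).1 hb) (hkey' b hb'))
      · exact (hbip v b h).2 hb
  refine ⟨hu, hv, ?_⟩
  intro p hp w hw hwVe
  exact (hFull u hu (stab w) ((hVe w).1 hwVe) (key p hp w hw)).symm
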